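/- arXiv:1201.5994 — 2 statements merged into one kernel-verified Lean document; each statement's English description precedes it below -/
import Mathlib

section
/- Let A and B be sequences of elements of S with |A| = |B| − 1 = n − 1, let D ⊆ S have size k − n − 2, and let x, y be two distinct elements of S, with A, B, D, {x}, {y} pairwise disjoint. Then (T_{D ∪ B}(y) / T_{D ∪ B}(x)) · P_{D ∪ {y}}((x) ⌢ A, B) = (−1)^{t+1} · P_{D ∪ {x}}((y) ⌢ A, B), where (x) ⌢ A denotes the sequence A with x prepended. -/
/-- `detCols L` is the determinant of the `k × k` matrix whose `j`-th column is the
`j`-th entry of the list `L` (lists of length ≠ `k` are padded with `0`). -/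
def detCols {F : Type} [CommRing F] {k : ℕ} (L : List (Fin k → F)) : F :=
  Matrix.det (Matrix.of fun i j : Fin k => L.getD (j : ℕ) 0 i)

/-- The Segre product `P_D(A, B)` of the sequences `A = (a_1, …, a_n)` and
`B = (b_0, …, b_{n−1})` with base `D`, with respect to the family of tangent functions `T`:
`∏_{i=1}^n T_{D ∪ {a_1,…,a_{i−1},b_i,…,b_{n−1}}}(a_i) ·
  T_{D ∪ {a_1,…,a_{i−1},b_i,…,b_{n−1}}}(b_{i−1})⁻¹`. -/
def segreP {F : Type} [Field F] [DecidableEq F] {k : ℕ}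
    (T : Finset (Fin k → F) → (Fin k → F) → F)
    (D : Finset (Fin k → F)) (A B : List (Fin k → F)) : F :=
  ∏ j ∈ Finset.range A.length,
    (T (D ∪ (A.take j).toFinset ∪ (B.drop (j + 1)).toFinset) (A.getD j 0) *
      (T (D ∪ (A.take j).toFinset ∪ (B.drop (j + 1)).toFinset) (B.getD j 0))⁻¹)

/-- `T` is a family of tangent functions for `S` (with `t` tangent hyperplanes through
each subset of size `k − 2`): for every `Y ⊆ S` with `|Y| = k − 2` there is a set `Φ` of
`t` pairwise linearly independent linear forms, each vanishing on `Y` and nonzero at every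
vector of `S \ Y`, with `T Y = ∏_{α ∈ Φ} α`. -/
def IsTangentFamily {F : Type} [Field F] [DecidableEq F] {k : ℕ} (t : ℕ)
    (S : Finset (Fin k → F)) (T : Finset (Fin k → F) → (Fin k → F) → F) : Prop :=
  ∀ Y : Finset (Fin k → F), Y ⊆ S → Y.card = k - 2 →
    ∃ Φ : Finset ((Fin k → F) →ₗ[F] F),
      Φ.card = t ∧
      (∀ α ∈ Φ, ∀ β ∈ Φ, α ≠ β → ∀ c : F, α ≠ c • β) ∧
      (∀ α ∈ Φ, ∀ y ∈ Y, α y = 0) ∧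
      (∀ α ∈ Φ, ∀ s ∈ S, s ∉ Y → α s ≠ 0) ∧
      (∀ x, T Y x = ∏ α ∈ Φ, α x)

/-- The subsequence of `L` consisting of the entries whose positions lie in `s`,
in their original order (`d` is a default value). -/
def subseq {α : Type} (d : α) (L : List α) (s : Finset ℕ) : List α :=
  ((List.range L.length).filter (fun i => decide (i ∈ s))).map (fun i => L.getD i d)

/-- The subsequence of `L` consisting of the entries whose positions do not lie in `s`,
in their original order (`d` is a default value). -/
def subseqC {α : Type} (d : α) (L : List α) (s : Finset ℕ) : List α :=
  ((List.range L.length).filter (fun i => decide (i ∉ s))).map (fun i => L.getD i d)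

/-- The number of transpositions needed (counted as the number of inversions) to reorder a
list of length `len` so that the entries in positions `s` occupy the last `|s|` positions,
preserving the relative order of the two groups. -/
def invCount (s : Finset ℕ) (len : ℕ) : ℕ :=
  ((Finset.range len ×ˢ Finset.range len).filter
    (fun ij => ij.1 ∈ s ∧ ij.2 ∉ s ∧ ij.1 < ij.2)).card

set_option maxHeartbeats 1000000
set_option linter.unusedSectionVars false


lemma prod_erase_zero {F : Type} [Field F] [Fintype F] [DecidableEq F] :
    ∏ w ∈ Finset.univ.erase (0 : F), w = -1 := by
  have h1 : ∏ w ∈ Finset.univ.erase (0 : F), w = ∏ u : Fˣ, ((u : F)) := by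
    refine (Finset.prod_bij (fun (u : Fˣ) _ => (u : F)) ?_ ?_ ?_ ?_).symm
    · intro u _; simp [Finset.mem_erase, Units.ne_zero]
    · intro u _ v _ h; exact Units.ext h
    · intro w hw
      rw [Finset.mem_erase] at hw
      exact ⟨Units.mk0 w hw.1, Finset.mem_univ _, rfl⟩
    · intro u _; rfl
  have h2 : (∏ u : Fˣ, ((u : F))) = (((∏ u : Fˣ, u : Fˣ)) : F) := by
    rw [← Units.coeHom_apply, map_prod]; rfl
  rw [h1, h2, FiniteField.prod_univ_units_id_eq_neg_one]
  simp


lemma rotationStep {F : Type} [Field F] [Fintype F] [DecidableEq F] {k q t : ℕ}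
    (hFq : Fintype.card F = q)
    (S : Finset (Fin k → F)) (T : Finset (Fin k → F) → (Fin k → F) → F)
    (hT : IsTangentFamily t S T)
    (Y : Finset (Fin k → F)) (hYS : Y ⊆ S) (hYcard : Y.card = k - 2)
    (b c : Fin k → F) (hbS : b ∈ S) (hcS : c ∈ S) (hbY : b ∉ Y) (hcY : c ∉ Y)
    (lb lc : (Fin k → F) →ₗ[F] F)
    (hker : ∀ β : (Fin k → F) →ₗ[F] F, (∀ w ∈ Y, β w = 0) → β b = 0 → β c = 0 → β = 0)
    (hlbY : ∀ w ∈ Y, lb w = 0) (hlcY : ∀ w ∈ Y, lc w = 0)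
    (hlbb : lb b = 1) (hlbc : lb c = 0) (hlcb : lc b = 0) (hlcc : lc c = 1)
    (U : Finset (Fin k → F)) (hUS : U ⊆ S)
    (hUY : ∀ u ∈ U, u ∉ Y ∧ u ≠ b ∧ u ≠ c)
    (hUcard : U.card + t + 1 = q)
    (hUb : ∀ u ∈ U, lb u ≠ 0) (hUc : ∀ u ∈ U, lc u ≠ 0)
    (hUinj : ∀ u ∈ U, ∀ u' ∈ U, lc u * lb u' = lc u' * lb u → u = u') :
    (∏ u ∈ U, lc u * (lb u)⁻¹) * ((-1 : F) ^ t * T Y b * (T Y c)⁻¹) = -1 := by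
  obtain ⟨Φ, hΦcard, hΦpp, hΦvan, hΦnz, hΦT⟩ := hT Y hYS hYcard
  have hαb : ∀ α ∈ Φ, α b ≠ 0 := fun α hα => hΦnz α hα b hbS hbY
  have hαc : ∀ α ∈ Φ, α c ≠ 0 := fun α hα => hΦnz α hα c hcS hcY
  -- every α in Φ is a combination of lb and lc
  have hrep : ∀ α ∈ Φ, α = α b • lb + α c • lc := by
    intro α hα
    have h0 : α - α b • lb - α c • lc = 0 := by
      apply hker
      · intro w hw
        simp [hΦvan α hα w hw, hlbY w hw, hlcY w hw]
      · simp [hlbb, hlcb]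
      · simp [hlbc, hlcc]
    exact sub_eq_zero.mp (by rw [sub_sub] at h0; exact h0)
  set f : (Fin k → F) → F := fun u => lc u * (lb u)⁻¹ with hf
  set g : ((Fin k → F) →ₗ[F] F) → F := fun α => -(α b) * (α c)⁻¹ with hg
  set I1 := U.image f with hI1
  set I2 := Φ.image g with hI2
  have hfinj : ∀ u ∈ U, ∀ u' ∈ U, f u = f u' → u = u' := by
    intro u hu u' hu' h
    apply hUinj u hu u' hu'
    have h1 := hUb u hu; have h2 := hUb u' hu'
    simp only [hf] at h
    field_simp [h1, h2] at h
    linear_combination h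
  have hginj : ∀ α ∈ Φ, ∀ β ∈ Φ, g α = g β → α = β := by
    intro α hα β hβ hgab
    by_contra hne
    have h1 := hαc α hα; have h2 := hαc β hβ
    have hcr : α b * β c = β b * α c := by
      simp only [hg] at hgab
      field_simp [h1, h2] at hgab
      linear_combination -hgab
    refine hΦpp α hα β hβ hne (α c * (β c)⁻¹) ?_
    have h0 : α - (α c * (β c)⁻¹) • β = 0 := by
      apply hker
      · intro w hw
        simp [hΦvan α hα w hw, hΦvan β hβ w hw]
      · simp only [LinearMap.sub_apply, LinearMap.smul_apply, smul_eq_mul]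
        field_simp
        linear_combination hcr
      · simp only [LinearMap.sub_apply, LinearMap.smul_apply, smul_eq_mul]
        field_simp
        simp
    exact sub_eq_zero.mp h0
  have hdisj : Disjoint I1 I2 := by
    rw [Finset.disjoint_left]
    rintro w hw1 hw2
    rw [hI1, Finset.mem_image] at hw1
    rw [hI2, Finset.mem_image] at hw2
    obtain ⟨u, hu, rfl⟩ := hw1
    obtain ⟨α, hα, hgα⟩ := hw2
    have h1 := hUb u hu; have h2 := hUc u hu
    have h3 := hαb α hα; have h4 := hαc α hα
    have hαu : α u = 0 := by
      rw [hrep α hα]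
      simp only [LinearMap.add_apply, LinearMap.smul_apply, smul_eq_mul]
      simp only [hf, hg] at hgα
      field_simp at hgα
      linear_combination -hgα
    exact hΦnz α hα u (hUS hu) (hUY u hu).1 hαu
  have hI1card : I1.card = U.card := Finset.card_image_of_injOn hfinj
  have hI2card : I2.card = t := by rw [hI2, Finset.card_image_of_injOn hginj, hΦcard]
  have hsub : I1 ∪ I2 ⊆ Finset.univ.erase (0 : F) := by
    intro w hw
    rw [Finset.mem_union] at hw
    rw [Finset.mem_erase]
    refine ⟨?_, Finset.mem_univ _⟩
    rcases hw with hw | hw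
    · rw [hI1, Finset.mem_image] at hw
      obtain ⟨u, hu, rfl⟩ := hw
      exact mul_ne_zero (hUc u hu) (inv_ne_zero (hUb u hu))
    · rw [hI2, Finset.mem_image] at hw
      obtain ⟨α, hα, rfl⟩ := hw
      exact mul_ne_zero (neg_ne_zero.mpr (hαb α hα)) (inv_ne_zero (hαc α hα))
  have hecard : (Finset.univ.erase (0 : F)).card = q - 1 := by
    rw [Finset.card_erase_of_mem (Finset.mem_univ _), Finset.card_univ, hFq]
  have heq : I1 ∪ I2 = Finset.univ.erase (0 : F) := by
    apply Finset.eq_of_subset_of_card_le hsub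
    rw [hecard, Finset.card_union_of_disjoint hdisj, hI1card, hI2card]
    omega
  have hprodall : (∏ w ∈ I1, w) * (∏ w ∈ I2, w) = -1 := by
    rw [← Finset.prod_union hdisj, heq, prod_erase_zero]
  rw [Finset.prod_image hfinj, Finset.prod_image hginj] at hprodall
  have hgprod : ∏ α ∈ Φ, g α = (-1 : F) ^ t * T Y b * (T Y c)⁻¹ := by
    rw [hΦT b, hΦT c]
    calc ∏ α ∈ Φ, g α = ∏ α ∈ Φ, ((-1) * (α b * (α c)⁻¹)) := by
          refine Finset.prod_congr rfl fun α _ => ?_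
          simp only [hg]; ring
      _ = (-1 : F) ^ Φ.card * ∏ α ∈ Φ, (α b * (α c)⁻¹) := by
          rw [Finset.prod_mul_distrib, Finset.prod_const]
      _ = (-1 : F) ^ t * (∏ α ∈ Φ, α b) * (∏ α ∈ Φ, α c)⁻¹ := by
          rw [hΦcard, Finset.prod_mul_distrib, Finset.prod_inv_distrib, mul_assoc]
  rw [hgprod] at hprodall
  exact hprodall


lemma T_ne_zero {F : Type} [Field F] [DecidableEq F] {k t : ℕ}
    {S : Finset (Fin k → F)} {T : Finset (Fin k → F) → (Fin k → F) → F}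
    (hT : IsTangentFamily t S T)
    {Y : Finset (Fin k → F)} (hYS : Y ⊆ S) (hYcard : Y.card = k - 2)
    {w : Fin k → F} (hwS : w ∈ S) (hwY : w ∉ Y) : T Y w ≠ 0 := by
  obtain ⟨Φ, _, _, _, hΦnz, hΦT⟩ := hT Y hYS hYcard
  rw [hΦT w]
  exact Finset.prod_ne_zero_iff.mpr fun α hα => hΦnz α hα w hwS hwY


section Triangle
variable {F : Type} [Field F] [Fintype F] [DecidableEq F] {k q t : ℕ}
  (hk : 3 ≤ k) (hFq : Fintype.card F = q)
  (S : Finset (Fin k → F))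
  (harc : ∀ A ⊆ S, A.card = k →
      LinearIndependent F (fun v : {x // x ∈ A} => (v : Fin k → F)) ∧
      Submodule.span F (A : Set (Fin k → F)) = ⊤)

include hk harc in
lemma notMemSpan
    (Q : Finset (Fin k → F)) (hQS : Q ⊆ S) (hQcard : Q.card = k - 1)
    (u : Fin k → F) (huS : u ∈ S) (huQ : u ∉ Q) :
    u ∉ Submodule.span F (Q : Set (Fin k → F)) := by
  have hk1 : 1 ≤ k := by omega
  set W : Finset (Fin k → F) := insert u Q with hW
  have hWS : W ⊆ S := Finset.insert_subset huS hQS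
  have hWcard : W.card = k := by
    rw [hW, Finset.card_insert_of_notMem huQ, hQcard]; omega
  have hind := (harc W hWS hWcard).1
  have hmem : u ∈ W := Finset.mem_insert_self u Q
  have hni := hind.notMem_span_image
    (s := {j : {x // x ∈ W} | (j : Fin k → F) ∈ Q}) (x := ⟨u, hmem⟩)
    (by simpa using huQ)
  have himg : (fun v : {x // x ∈ W} => (v : Fin k → F)) ''
      {j : {x // x ∈ W} | (j : Fin k → F) ∈ Q} = (Q : Set (Fin k → F)) := by
    ext w
    constructor
    · rintro ⟨j, hj, rfl⟩; exact hj
    · intro hw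
      exact ⟨⟨w, Finset.mem_insert_of_mem hw⟩, hw, rfl⟩
  rw [himg] at hni
  exact hni
end Triangle

section Tri2
variable {F : Type} [Field F] [Fintype F] [DecidableEq F] {k q t : ℕ}
  (hk : 3 ≤ k) (hFq : Fintype.card F = q)
  (S : Finset (Fin k → F))
  (harc : ∀ A ⊆ S, A.card = k →
      LinearIndependent F (fun v : {x // x ∈ A} => (v : Fin k → F)) ∧
      Submodule.span F (A : Set (Fin k → F)) = ⊤)

include hk hFq harc in
lemma triangleLemma (ht : S.card + t = q + k - 1) (hSk : k ≤ S.card)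
    (T : Finset (Fin k → F) → (Fin k → F) → F) (hT : IsTangentFamily t S T)
    (E : Finset (Fin k → F)) (hES : E ⊆ S) (hEcard : E.card + 3 = k)
    (x y z : Fin k → F) (hx : x ∈ S) (hy : y ∈ S) (hz : z ∈ S)
    (hxE : x ∉ E) (hyE : y ∉ E) (hzE : z ∉ E)
    (hxy : x ≠ y) (hxz : x ≠ z) (hyz : y ≠ z) :
    T (insert x E) y * T (insert y E) z * T (insert z E) x
      = (-1 : F) ^ (t + 1) * (T (insert x E) z * T (insert y E) x * T (insert z E) y) := by
  classical
  set W : Finset (Fin k → F) := insert x (insert y (insert z E)) with hW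
  have hxW : x ∈ W := by simp [hW]
  have hyW : y ∈ W := by simp [hW]
  have hzW : z ∈ W := by simp [hW]
  have hWS : W ⊆ S := by
    rw [hW]
    exact Finset.insert_subset hx (Finset.insert_subset hy (Finset.insert_subset hz hES))
  have hWcard : W.card = k := by
    rw [hW, Finset.card_insert_of_notMem (by simp [hxy, hxz, hxE]),
      Finset.card_insert_of_notMem (by simp [hyz, hyE]),
      Finset.card_insert_of_notMem hzE]
    omega
  obtain ⟨hind, hspan⟩ := harc W hWS hWcard
  set Bs : Module.Basis {v // v ∈ W} F (Fin k → F) :=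
    Module.Basis.mk hind (by simp only [Subtype.range_coe_subtype, Finset.setOf_mem, hspan]; exact le_rfl) with hBs
  have hBsapp : ∀ (j : {v // v ∈ W}), Bs j = (j : Fin k → F) := fun j => Module.Basis.mk_apply _ _ j
  have coordfact : ∀ (w w' : Fin k → F) (hw : w ∈ W), w' ∈ W →
      Bs.coord ⟨w, hw⟩ w' = if w' = w then 1 else 0 := by
    intro w w' hw hw'
    have key : Bs.coord ⟨w, hw⟩ (Bs ⟨w', hw'⟩) = if w' = w then 1 else 0 := by
      rw [Module.Basis.coord_apply, Module.Basis.repr_self, Finsupp.single_apply]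
      by_cases hc : w' = w
      · simp [hc]
      · rw [if_neg (fun hcc => hc (by simpa using congrArg Subtype.val hcc)), if_neg hc]
    rw [hBsapp] at key
    exact key
  have hcoordnz : ∀ u ∈ S, u ∉ W → ∀ (w : Fin k → F) (hw : w ∈ W),
      Bs.coord ⟨w, hw⟩ u ≠ 0 := by
    intro u huS huW w hw hzero
    refine notMemSpan hk S harc (W.erase w) (Finset.erase_subset _ _ |>.trans hWS)
      (by rw [Finset.card_erase_of_mem hw, hWcard]) u huS
      (fun hmem => huW (Finset.mem_of_mem_erase hmem)) ?_
    have hsub : Bs '' ((Bs.repr u).support : Set {v // v ∈ W}) ⊆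
        ((W.erase w : Finset (Fin k → F)) : Set (Fin k → F)) := by
      rintro _ ⟨j, hj, rfl⟩
      rw [hBsapp]
      rw [Finset.coe_erase]
      refine ⟨j.2, ?_⟩
      simp only [Set.mem_singleton_iff]
      intro hjw
      have : j = ⟨w, hw⟩ := Subtype.ext hjw
      rw [this] at hj
      rw [Module.Basis.coord_apply] at hzero
      simp only [Finset.mem_coe, Finsupp.mem_support_iff] at hj
      exact hj hzero
    exact Submodule.span_mono hsub (Module.Basis.mem_span_repr_support Bs u)
  set U : Finset (Fin k → F) := S \ W with hU
  have hUS : U ⊆ S := Finset.sdiff_subset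
  have hUW : ∀ u ∈ U, u ∉ W := fun u hu => (Finset.mem_sdiff.mp hu).2
  have hUcard : U.card + t + 1 = q := by
    rw [hU, Finset.card_sdiff_of_subset hWS, hWcard]
    omega
  -- injectivity claim
  have injClaim : ∀ (bv cv : Fin k → F) (hbv : bv ∈ W) (hcv : cv ∈ W), bv ≠ cv →
      ∀ u ∈ U, ∀ u' ∈ U,
        Bs.coord ⟨cv, hcv⟩ u * Bs.coord ⟨bv, hbv⟩ u' =
          Bs.coord ⟨cv, hcv⟩ u' * Bs.coord ⟨bv, hbv⟩ u → u = u' := by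
    intro bv cv hbv hcv hbc u hu u' hu' heq
    by_contra hne
    set lb := Bs.coord ⟨bv, hbv⟩ with hlb
    set lc := Bs.coord ⟨cv, hcv⟩ with hlc
    have hbu' : lb u' ≠ 0 := hcoordnz u' (hUS hu') (hUW u' hu') bv hbv
    set v : Fin k → F := lb u' • u - lb u • u' with hv
    have hvb : Bs.repr v ⟨bv, hbv⟩ = 0 := by
      have : Bs.coord ⟨bv, hbv⟩ v = 0 := by
        rw [hv, map_sub, map_smul, map_smul]
        simp only [smul_eq_mul, ← hlb]
        ring
      rwa [Module.Basis.coord_apply] at this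
    have hvc : Bs.repr v ⟨cv, hcv⟩ = 0 := by
      have : Bs.coord ⟨cv, hcv⟩ v = 0 := by
        rw [hv, map_sub, map_smul, map_smul]
        simp only [smul_eq_mul, ← hlb, ← hlc]
        linear_combination heq
      rwa [Module.Basis.coord_apply] at this
    set Q : Finset (Fin k → F) := insert u' ((W.erase bv).erase cv) with hQ
    have hcvW : cv ∈ W.erase bv := Finset.mem_erase.mpr ⟨fun h => hbc h.symm, hcv⟩
    have hQcard : Q.card = k - 1 := by
      rw [hQ, Finset.card_insert_of_notMem
        (fun hmem => hUW u' hu' (Finset.mem_of_mem_erase (Finset.mem_of_mem_erase hmem))),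
        Finset.card_erase_of_mem hcvW, Finset.card_erase_of_mem hbv, hWcard]
      omega
    have hQS : Q ⊆ S := by
      rw [hQ]
      exact Finset.insert_subset (hUS hu')
        (((W.erase bv).erase_subset _).trans ((W.erase_subset _).trans hWS))
    have huQ : u ∉ Q := by
      rw [hQ, Finset.mem_insert]
      rintro (h | h)
      · exact hne h
      · exact hUW u hu (Finset.mem_of_mem_erase (Finset.mem_of_mem_erase h))
    refine notMemSpan hk S harc Q hQS hQcard u (hUS hu) huQ ?_
    have hvmem : v ∈ Submodule.span F (Q : Set (Fin k → F)) := by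
      have hsub : Bs '' ((Bs.repr v).support : Set {w // w ∈ W}) ⊆
          (Q : Set (Fin k → F)) := by
        rintro _ ⟨j, hj, rfl⟩
        rw [hBsapp, hQ]
        simp only [Finset.coe_insert, Set.mem_insert_iff, Finset.coe_erase,
          Set.mem_diff, Set.mem_singleton_iff]
        right
        refine ⟨⟨j.2, ?_⟩, ?_⟩
        · intro hjb
          have : j = ⟨bv, hbv⟩ := Subtype.ext hjb
          rw [this] at hj
          simp only [Finset.mem_coe, Finsupp.mem_support_iff] at hj
          exact hj hvb
        · intro hjc
          have : j = ⟨cv, hcv⟩ := Subtype.ext hjc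
          rw [this] at hj
          simp only [Finset.mem_coe, Finsupp.mem_support_iff] at hj
          exact hj hvc
      exact Submodule.span_mono hsub (Module.Basis.mem_span_repr_support Bs v)
    have hu'mem : u' ∈ Submodule.span F (Q : Set (Fin k → F)) :=
      Submodule.subset_span (by rw [hQ]; simp)
    have hurep : u = (lb u')⁻¹ • v + ((lb u')⁻¹ * lb u) • u' := by
      rw [hv, smul_sub, smul_smul, smul_smul, inv_mul_cancel₀ hbu', one_smul]
      abel
    rw [hurep]
    exact Submodule.add_mem _ (Submodule.smul_mem _ _ hvmem) (Submodule.smul_mem _ _ hu'mem)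
  -- memberships in W
  have hmemW : ∀ w ∈ W, w = x ∨ w = y ∨ w = z ∨ w ∈ E := by
    intro w hw
    rw [hW] at hw
    simp only [Finset.mem_insert] at hw
    tauto
  -- the three tangent sets
  have hYx : insert x E ⊆ S := Finset.insert_subset hx hES
  have hYy : insert y E ⊆ S := Finset.insert_subset hy hES
  have hYz : insert z E ⊆ S := Finset.insert_subset hz hES
  have hYxcard : (insert x E).card = k - 2 := by
    rw [Finset.card_insert_of_notMem hxE]; omega
  have hYycard : (insert y E).card = k - 2 := by
    rw [Finset.card_insert_of_notMem hyE]; omega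
  have hYzcard : (insert z E).card = k - 2 := by
    rw [Finset.card_insert_of_notMem hzE]; omega
  have hyYx : y ∉ insert x E := by
    simp only [Finset.mem_insert]; rintro (h | h); exacts [hxy h.symm, hyE h]
  have hzYx : z ∉ insert x E := by
    simp only [Finset.mem_insert]; rintro (h | h); exacts [hxz h.symm, hzE h]
  have hxYy : x ∉ insert y E := by
    simp only [Finset.mem_insert]; rintro (h | h); exacts [hxy h, hxE h]
  have hzYy : z ∉ insert y E := by
    simp only [Finset.mem_insert]; rintro (h | h); exacts [hyz h.symm, hzE h]
  have hxYz : x ∉ insert z E := by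
    simp only [Finset.mem_insert]; rintro (h | h); exacts [hxz h, hxE h]
  have hyYz : y ∉ insert z E := by
    simp only [Finset.mem_insert]; rintro (h | h); exacts [hyz h, hyE h]
  set lx := Bs.coord ⟨x, hxW⟩ with hlxdef
  set ly := Bs.coord ⟨y, hyW⟩ with hlydef
  set lz := Bs.coord ⟨z, hzW⟩ with hlzdef
  have hEW : ∀ w ∈ E, w ∈ W := by
    intro w hw; rw [hW]; simp [hw]
  -- vanishing of coords
  have hlxvan : ∀ w ∈ W, w ≠ x → lx w = 0 := by
    intro w hw hwx; rw [hlxdef, coordfact x w hxW hw, if_neg hwx]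
  have hlyvan : ∀ w ∈ W, w ≠ y → ly w = 0 := by
    intro w hw hwy; rw [hlydef, coordfact y w hyW hw, if_neg hwy]
  have hlzvan : ∀ w ∈ W, w ≠ z → lz w = 0 := by
    intro w hw hwz; rw [hlzdef, coordfact z w hzW hw, if_neg hwz]
  have hlxx : lx x = 1 := by rw [hlxdef, coordfact x x hxW hxW, if_pos rfl]
  have hlyy : ly y = 1 := by rw [hlydef, coordfact y y hyW hyW, if_pos rfl]
  have hlzz : lz z = 1 := by rw [hlzdef, coordfact z z hzW hzW, if_pos rfl]
  -- kernel claims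
  have kerW : ∀ β : (Fin k → F) →ₗ[F] F, (∀ w ∈ W, β w = 0) → β = 0 := by
    intro β hβ
    apply Bs.ext
    intro j
    rw [hBsapp]
    simp [hβ j.1 j.2]
  have hUY : ∀ (Yv : Fin k → F), Yv ∈ W → ∀ u ∈ U, u ∉ insert Yv E := by
    intro Yv _ u hu hmem
    rcases Finset.mem_insert.mp hmem with h | h
    · exact hUW u hu (h ▸ (by rw [hW] at *; exact (by subst h; assumption)))
    · exact hUW u hu (hEW u h)
  -- rotation 1 : Y = insert x E, b = y, c = z
  have R1 := rotationStep hFq S T hT (insert x E) hYx hYxcard y z hy hz hyYx hzYx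
    ly lz
    (by
      intro β hβ hβy hβz
      apply kerW
      intro w hw
      rcases hmemW w hw with rfl | rfl | rfl | hwE
      · exact hβ w (Finset.mem_insert_self _ _)
      · exact hβy
      · exact hβz
      · exact hβ w (Finset.mem_insert_of_mem hwE))
    (by
      intro w hw
      rcases Finset.mem_insert.mp hw with rfl | hwE
      · exact hlyvan w hxW hxy
      · exact hlyvan w (hEW w hwE) (fun h => hyE (h ▸ hwE)))
    (by
      intro w hw
      rcases Finset.mem_insert.mp hw with rfl | hwE
      · exact hlzvan w hxW hxz
      · exact hlzvan w (hEW w hwE) (fun h => hzE (h ▸ hwE)))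
    hlyy (hlyvan z hzW (fun h => hyz h.symm)) (hlzvan y hyW hyz) hlzz
    U hUS
    (by
      intro u hu
      exact ⟨hUY x hxW u hu, fun h => hUW u hu (h ▸ hyW), fun h => hUW u hu (h ▸ hzW)⟩)
    hUcard
    (fun u hu => hcoordnz u (hUS hu) (hUW u hu) y hyW)
    (fun u hu => hcoordnz u (hUS hu) (hUW u hu) z hzW)
    (fun u hu u' hu' hh => injClaim y z hyW hzW hyz u hu u' hu' hh)
  -- rotation 2 : Y = insert y E, b = z, c = x
  have R2 := rotationStep hFq S T hT (insert y E) hYy hYycard z x hz hx hzYy hxYy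
    lz lx
    (by
      intro β hβ hβz hβx
      apply kerW
      intro w hw
      rcases hmemW w hw with rfl | rfl | rfl | hwE
      · exact hβx
      · exact hβ w (Finset.mem_insert_self _ _)
      · exact hβz
      · exact hβ w (Finset.mem_insert_of_mem hwE))
    (by
      intro w hw
      rcases Finset.mem_insert.mp hw with rfl | hwE
      · exact hlzvan w hyW hyz
      · exact hlzvan w (hEW w hwE) (fun h => hzE (h ▸ hwE)))
    (by
      intro w hw
      rcases Finset.mem_insert.mp hw with rfl | hwE
      · exact hlxvan w hyW (fun h => hxy h.symm)
      · exact hlxvan w (hEW w hwE) (fun h => hxE (h ▸ hwE)))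
    hlzz (hlzvan x hxW hxz) (hlxvan z hzW (fun h => hxz h.symm)) hlxx
    U hUS
    (by
      intro u hu
      exact ⟨hUY y hyW u hu, fun h => hUW u hu (h ▸ hzW), fun h => hUW u hu (h ▸ hxW)⟩)
    hUcard
    (fun u hu => hcoordnz u (hUS hu) (hUW u hu) z hzW)
    (fun u hu => hcoordnz u (hUS hu) (hUW u hu) x hxW)
    (fun u hu u' hu' hh => injClaim z x hzW hxW (fun h => hxz h.symm) u hu u' hu' hh)
  -- rotation 3 : Y = insert z E, b = x, c = y
  have R3 := rotationStep hFq S T hT (insert z E) hYz hYzcard x y hx hy hxYz hyYz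
    lx ly
    (by
      intro β hβ hβx hβy
      apply kerW
      intro w hw
      rcases hmemW w hw with rfl | rfl | rfl | hwE
      · exact hβx
      · exact hβy
      · exact hβ w (Finset.mem_insert_self _ _)
      · exact hβ w (Finset.mem_insert_of_mem hwE))
    (by
      intro w hw
      rcases Finset.mem_insert.mp hw with rfl | hwE
      · exact hlxvan w hzW hxz.symm
      · exact hlxvan w (hEW w hwE) (fun h => hxE (h ▸ hwE)))
    (by
      intro w hw
      rcases Finset.mem_insert.mp hw with rfl | hwE
      · exact hlyvan w hzW hyz.symm
      · exact hlyvan w (hEW w hwE) (fun h => hyE (h ▸ hwE)))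
    hlxx (hlxvan y hyW hxy.symm) (hlyvan x hxW hxy) hlyy
    U hUS
    (by
      intro u hu
      exact ⟨hUY z hzW u hu, fun h => hUW u hu (h ▸ hxW), fun h => hUW u hu (h ▸ hyW)⟩)
    hUcard
    (fun u hu => hcoordnz u (hUS hu) (hUW u hu) x hxW)
    (fun u hu => hcoordnz u (hUS hu) (hUW u hu) y hyW)
    (fun u hu u' hu' hh => injClaim x y hxW hyW hxy u hu u' hu' hh)
  -- combine
  set P1 := ∏ u ∈ U, lz u * (ly u)⁻¹ with hP1
  set P2 := ∏ u ∈ U, lx u * (lz u)⁻¹ with hP2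
  set P3 := ∏ u ∈ U, ly u * (lx u)⁻¹ with hP3
  have hprod : P1 * P2 * P3 = 1 := by
    rw [hP1, hP2, hP3, ← Finset.prod_mul_distrib, ← Finset.prod_mul_distrib]
    apply Finset.prod_eq_one
    intro u hu
    have h1 := hcoordnz u (hUS hu) (hUW u hu) x hxW
    have h2 := hcoordnz u (hUS hu) (hUW u hu) y hyW
    have h3 := hcoordnz u (hUS hu) (hUW u hu) z hzW
    rw [← hlxdef] at h1
    rw [← hlydef] at h2
    rw [← hlzdef] at h3
    field_simp
  have hTxy := T_ne_zero hT hYx hYxcard hy hyYx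
  have hTxz := T_ne_zero hT hYx hYxcard hz hzYx
  have hTyz := T_ne_zero hT hYy hYycard hz hzYy
  have hTyx := T_ne_zero hT hYy hYycard hx hxYy
  have hTzx := T_ne_zero hT hYz hYzcard hx hxYz
  have hTzy := T_ne_zero hT hYz hYzcard hy hyYz
  have big : (P1 * ((-1 : F) ^ t * T (insert x E) y * (T (insert x E) z)⁻¹)) *
      ((P2 * ((-1 : F) ^ t * T (insert y E) z * (T (insert y E) x)⁻¹)) *
       (P3 * ((-1 : F) ^ t * T (insert z E) x * (T (insert z E) y)⁻¹))) =
      (-1 : F) * ((-1) * (-1)) := by rw [R1, R2, R3]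
  have hs : (-1 : F) ^ t * (-1 : F) ^ t = 1 := by
    rw [← pow_add]
    have : t + t = 2 * t := by ring
    rw [this, pow_mul]
    norm_num
  field_simp at big
  linear_combination ((-1 : F) ^ t) * big
    - ((-1 : F) ^ t * (-1 : F) ^ t * (-1 : F) ^ t * (-1 : F) ^ t) *
      (T (insert x E) y * T (insert y E) z * T (insert z E) x) * hprod
    - (T (insert x E) y * T (insert y E) z * T (insert z E) x) *
      ((-1 : F) ^ t * (-1 : F) ^ t + 1) * hs
end Tri2


/-- switch lemma: for sequences `A`, `B` with `|A| = |B| − 1 = n − 1`,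
`D ⊆ S` of size `k − n − 2` and distinct `x, y ∈ S` (all pairwise disjoint):
`(T_{D∪B}(y) / T_{D∪B}(x)) · P_{D∪{y}}((x) ⌢ A, B) = (−1)^{t+1} · P_{D∪{x}}((y) ⌢ A, B)`. -/

theorem statement8 (p h k q t n : ℕ) (hp : p.Prime) (hh : 1 ≤ h) (hq : q = p ^ h)
    (hk : 3 ≤ k)
    (F : Type) [Field F] [Fintype F] [DecidableEq F] (hF : Fintype.card F = q)
    (S : Finset (Fin k → F))
    (harc : ∀ A ⊆ S, A.card = k →
      LinearIndependent F (fun v : {x // x ∈ A} => (v : Fin k → F)) ∧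
      Submodule.span F (A : Set (Fin k → F)) = ⊤)
    (ht : S.card + t = q + k - 1) (ht1 : 1 ≤ t) (hSk : k ≤ S.card)
    (T : Finset (Fin k → F) → (Fin k → F) → F) (hT : IsTangentFamily t S T)
    (A B : List (Fin k → F)) (hA : A.length + 1 = n) (hB : B.length = n)
    (x y : Fin k → F)
    (hnd : (x :: y :: (A ++ B)).Nodup) (hin : ∀ v ∈ x :: y :: (A ++ B), v ∈ S)
    (D : Finset (Fin k → F)) (hD : D ⊆ S) (hDcard : D.card + n + 2 = k)
    (hdisj : ∀ v ∈ x :: y :: (A ++ B), v ∉ D) :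
    T (D ∪ B.toFinset) y * (T (D ∪ B.toFinset) x)⁻¹ *
        segreP T (insert y D) (x :: A) B =
      (-1 : F) ^ (t + 1) * segreP T (insert x D) (y :: A) B := by
  classical
  -- B is nonempty
  obtain ⟨z, Bt, rfl⟩ : ∃ z Bt, B = z :: Bt := by
    cases B with
    | nil => simp at hB; omega
    | cons a l => exact ⟨a, l, rfl⟩
  -- extract facts from nodup / membership
  simp only [List.nodup_cons, List.mem_cons, List.mem_append, not_or] at hnd
  obtain ⟨⟨hxy, hxA, hxz, hxBt⟩, ⟨hyA, hyz, hyBt⟩, hndAB⟩ := hnd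
  have hxS : x ∈ S := hin x (by simp)
  have hyS : y ∈ S := hin y (by simp)
  have hzS : z ∈ S := hin z (by simp)
  have hzBt : z ∉ Bt := by
    rw [List.nodup_append] at hndAB
    exact (List.nodup_cons.mp hndAB.2.1).1
  have hBtnd : Bt.Nodup := by
    have h2 := hndAB
    rw [List.nodup_append] at h2
    exact (List.nodup_cons.mp h2.2.1).2
  have hBtS : ∀ v ∈ Bt, v ∈ S := fun v hv => hin v (by simp [hv])
  have hxD : x ∉ D := hdisj x (by simp)
  have hyD : y ∉ D := hdisj y (by simp)
  have hzD : z ∉ D := hdisj z (by simp)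
  have hBtD : ∀ v ∈ Bt, v ∉ D := fun v hv => hdisj v (by simp [hv])
  -- the base set E'
  set E' : Finset (Fin k → F) := D ∪ Bt.toFinset with hE'
  have hE'S : E' ⊆ S := Finset.union_subset hD (by
    intro v hv; exact hBtS v (List.mem_toFinset.mp hv))
  have hBtlen : Bt.length + 1 = n := by simpa using hB
  have hE'card : E'.card + 3 = k := by
    rw [hE', Finset.card_union_of_disjoint (by
      rw [Finset.disjoint_left]; intro v hv hv2
      exact hBtD v (List.mem_toFinset.mp hv2) hv),
      List.toFinset_card_of_nodup hBtnd]
    omega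
  have hxE' : x ∉ E' := by
    rw [hE', Finset.mem_union]
    rintro (hh | hh)
    exacts [hxD hh, hxBt (List.mem_toFinset.mp hh)]
  have hyE' : y ∉ E' := by
    rw [hE', Finset.mem_union]
    rintro (hh | hh)
    exacts [hyD hh, hyBt (List.mem_toFinset.mp hh)]
  have hzE' : z ∉ E' := by
    rw [hE', Finset.mem_union]
    rintro (hh | hh)
    exacts [hzD hh, hzBt (List.mem_toFinset.mp hh)]
  -- triangle with (y, x, z)
  have tri := triangleLemma hk hF S harc ht hSk T hT E' hE'S hE'card y x z hyS hxS hzS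
    hyE' hxE' hzE' (fun hh => hxy hh.symm) hyz hxz
  -- nonvanishing
  have hYy : insert y E' ⊆ S := Finset.insert_subset hyS hE'S
  have hYx : insert x E' ⊆ S := Finset.insert_subset hxS hE'S
  have hYz : insert z E' ⊆ S := Finset.insert_subset hzS hE'S
  have hYycard : (insert y E').card = k - 2 := by
    rw [Finset.card_insert_of_notMem hyE']; omega
  have hYxcard : (insert x E').card = k - 2 := by
    rw [Finset.card_insert_of_notMem hxE']; omega
  have hYzcard : (insert z E').card = k - 2 := by
    rw [Finset.card_insert_of_notMem hzE']; omega
  have hxYy : x ∉ insert y E' := by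
    simp only [Finset.mem_insert]; rintro (hh | hh); exacts [hxy hh, hxE' hh]
  have hyYx : y ∉ insert x E' := by
    simp only [Finset.mem_insert]; rintro (hh | hh); exacts [hxy hh.symm, hyE' hh]
  have hzYy : z ∉ insert y E' := by
    simp only [Finset.mem_insert]; rintro (hh | hh); exacts [hyz hh.symm, hzE' hh]
  have hzYx : z ∉ insert x E' := by
    simp only [Finset.mem_insert]; rintro (hh | hh); exacts [hxz hh.symm, hzE' hh]
  have hxYz : x ∉ insert z E' := by
    simp only [Finset.mem_insert]; rintro (hh | hh); exacts [hxz hh, hxE' hh]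
  have hyYz : y ∉ insert z E' := by
    simp only [Finset.mem_insert]; rintro (hh | hh); exacts [hyz hh, hyE' hh]
  have hTyx := T_ne_zero hT hYy hYycard hxS hxYy
  have hTyz := T_ne_zero hT hYy hYycard hzS hzYy
  have hTxy := T_ne_zero hT hYx hYxcard hyS hyYx
  have hTxz := T_ne_zero hT hYx hYxcard hzS hzYx
  have hTzx := T_ne_zero hT hYz hYzcard hxS hxYz
  have hTzy := T_ne_zero hT hYz hYzcard hyS hyYz
  -- key identity
  have hDB : D ∪ (z :: Bt).toFinset = insert z E' := by
    rw [hE', List.toFinset_cons, Finset.union_insert]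
  have key : T (insert z E') y * (T (insert z E') x)⁻¹ *
      (T (insert y E') x * (T (insert y E') z)⁻¹) =
      (-1 : F) ^ (t + 1) * (T (insert x E') y * (T (insert x E') z)⁻¹) := by
    field_simp [hTzx, hTyz, hTxz]
    linear_combination tri
  -- expand segreP
  rw [hDB]
  unfold segreP
  simp only [List.length_cons]
  rw [Finset.prod_range_succ', Finset.prod_range_succ']
  have hcommon : ∀ i ∈ Finset.range A.length,
      (T (insert y D ∪ ((x :: A).take (i + 1)).toFinset ∪
          ((z :: Bt).drop (i + 1 + 1)).toFinset) ((x :: A).getD (i + 1) 0) *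
        (T (insert y D ∪ ((x :: A).take (i + 1)).toFinset ∪
          ((z :: Bt).drop (i + 1 + 1)).toFinset) ((z :: Bt).getD (i + 1) 0))⁻¹) =
      (T (insert x D ∪ ((y :: A).take (i + 1)).toFinset ∪
          ((z :: Bt).drop (i + 1 + 1)).toFinset) ((y :: A).getD (i + 1) 0) *
        (T (insert x D ∪ ((y :: A).take (i + 1)).toFinset ∪
          ((z :: Bt).drop (i + 1 + 1)).toFinset) ((z :: Bt).getD (i + 1) 0))⁻¹) := by
    intro i _
    have hset : insert y D ∪ ((x :: A).take (i + 1)).toFinset =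
        insert x D ∪ ((y :: A).take (i + 1)).toFinset := by
      rw [List.take_succ_cons, List.take_succ_cons, List.toFinset_cons, List.toFinset_cons]
      ext w
      simp only [Finset.mem_union, Finset.mem_insert]
      tauto
    rw [hset]
    simp only [List.getD_cons_succ]
  rw [Finset.prod_congr rfl hcommon]
  -- now handle the j = 0 terms
  simp only [List.take_zero, List.toFinset_nil, Finset.union_empty, List.drop_succ_cons,
    List.drop_zero, List.getD_cons_zero]
  have hyun : insert y D ∪ Bt.toFinset = insert y E' := by
    rw [hE', Finset.insert_union]
  have hxun : insert x D ∪ Bt.toFinset = insert x E' := by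
    rw [hE', Finset.insert_union]
  rw [hyun, hxun]
  have final : ∀ C : F, T (insert z E') y * (T (insert z E') x)⁻¹ *
      (C * (T (insert y E') x * (T (insert y E') z)⁻¹)) =
      (-1 : F) ^ (t + 1) * (C * (T (insert x E') y * (T (insert x E') z)⁻¹)) := by
    intro C
    linear_combination C * key
  exact final _
end

section
/- Let F be a field, k ≥ 1 and 0 ≤ n ≤ k − 1. Let W = (w_1, …, w_{n+1}) and L = (ℓ_1, …, ℓ_{k−n−1}) be vectors of F^k such that the k vectors w_1, …, w_{n+1}, ℓ_1, …, ℓ_{k−n−1} form a basis of F^k, let X = (x_1, …, x_n) be vectors of F^k and let y ∈ F^k. Then ∑_{j=1}^{n+1} (−1)^{j−1} det(y, W \ w_j, L) · det(w_j, X, L) = det(W, L) · det(y, X, L), where W \ w_j is W with w_j removed (order preserved). -/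
lemma detCols_cons_eq_update {F : Type} [CommRing F] {m : ℕ} (T : List (Fin (m + 1) → F))
    (y : Fin (m + 1) → F) :
    detCols (y :: T) =
      ((Matrix.of fun i j : Fin (m + 1) => ((0 : Fin (m + 1) → F) :: T).getD (j : ℕ) 0 i).updateCol
        0 y).det := by
  unfold detCols
  congr 1
  ext i j
  rcases eq_or_ne j 0 with h | h
  · subst h; simp [Matrix.updateCol_apply]
  · have hj : (j : ℕ) ≠ 0 := fun e => h (Fin.ext (by simpa using e))
    obtain ⟨l, hl⟩ := Nat.exists_eq_succ_of_ne_zero hj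
    simp [Matrix.updateCol_apply, h, hl]

def detConsLin {F : Type} [CommRing F] {m : ℕ} (T : List (Fin (m + 1) → F)) :
    (Fin (m + 1) → F) →ₗ[F] F where
  toFun y := detCols (y :: T)
  map_add' y z := by
    simp only [detCols_cons_eq_update]
    exact Matrix.det_updateCol_add _ 0 y z
  map_smul' c y := by
    simp only [detCols_cons_eq_update, RingHom.id_apply]
    exact Matrix.det_updateCol_smul _ 0 c y

@[simp] lemma detConsLin_apply {F : Type} [CommRing F] {m : ℕ} (T : List (Fin (m + 1) → F))
    (y : Fin (m + 1) → F) : detConsLin T y = detCols (y :: T) := rfl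

lemma detCols_zero_of_eq {F : Type} [CommRing F] {k : ℕ} (T : List (Fin k → F))
    (p q : Fin k) (hpq : p ≠ q) (h : T.getD (p : ℕ) 0 = T.getD (q : ℕ) 0) :
    detCols T = 0 :=
  Matrix.det_zero_of_column_eq hpq fun r => congrFun h r

lemma detCols_cons_eraseIdx {F : Type} [CommRing F] {k : ℕ} (M : List (Fin k → F))
    (hM : M.length = k) (i : ℕ) (hi : i < k) :
    detCols (M.getD i 0 :: M.eraseIdx i) = (-1 : F) ^ i * detCols M := by
  obtain ⟨m, rfl⟩ : ∃ m, k = m + 1 := ⟨k - 1, by omega⟩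
  set I : Fin (m + 1) := ⟨i, hi⟩ with hI
  have hmat : (Matrix.of fun r j : Fin (m + 1) =>
      (M.getD i 0 :: M.eraseIdx i).getD (j : ℕ) 0 r) =
      (Matrix.of fun r j : Fin (m + 1) => M.getD (j : ℕ) 0 r).submatrix id ⇑I.cycleRange⁻¹ := by
    ext r j
    refine Fin.cases ?_ (fun j' => ?_) j
    · simp [Equiv.Perm.inv_def, Fin.cycleRange_symm_zero, hI]
    · simp only [Matrix.submatrix_apply, id_eq, Equiv.Perm.inv_def,
        Fin.cycleRange_symm_succ, Matrix.of_apply]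
      have hval : (j'.succ : ℕ) = (j' : ℕ) + 1 := rfl
      rw [hval, List.getD_cons_succ]
      rw [List.getD_eq_getElem?_getD, List.getElem?_eraseIdx]
      by_cases h : (j' : ℕ) < i
      · rw [if_pos h, Fin.succAbove_of_castSucc_lt _ _ (by simpa [Fin.lt_iff_val_lt_val, hI])]
        simp [List.getD_eq_getElem?_getD]
      · rw [if_neg h, Fin.succAbove_of_le_castSucc _ _
          (by simp [Fin.le_iff_val_le_val, hI]; omega)]
        simp [List.getD_eq_getElem?_getD]
  unfold detCols
  rw [hmat, Matrix.det_permute']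
  congr 1
  have : Equiv.Perm.sign I.cycleRange⁻¹ = (-1 : ℤˣ) ^ i := by
    simp [Fin.sign_cycleRange, hI]
  rw [this]
  simp


/-- Laplace: let `F` be a field, `k ≥ 1`, `0 ≤ n ≤ k − 1`, let
`W = (w_1,…,w_{n+1})` and `L = (ℓ_1,…,ℓ_{k−n−1})` be vectors of `F^k` such that
`w_1,…,w_{n+1},ℓ_1,…,ℓ_{k−n−1}` form a basis of `F^k`, let `X = (x_1,…,x_n)` be vectors of
`F^k` and `y ∈ F^k`.  Then
`∑_{j=1}^{n+1} (−1)^{j−1} det(y, W∖w_j, L) det(w_j, X, L) = det(W, L) det(y, X, L)`. -/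
theorem statement11 (F : Type) [Field F] (k n : ℕ) (hk : 1 ≤ k) (hn : n + 1 ≤ k)
    (W L X : List (Fin k → F)) (y : Fin k → F)
    (hW : W.length = n + 1) (hL : L.length + n + 1 = k) (hX : X.length = n)
    (hbasis : LinearIndependent F (fun i : Fin k => (W ++ L).getD (i : ℕ) 0) ∧
      Submodule.span F {v | v ∈ W ++ L} = ⊤) :
    ∑ j ∈ Finset.range (n + 1),
        (-1 : F) ^ j * detCols (y :: (W.eraseIdx j ++ L)) *
          detCols (W.getD j 0 :: (X ++ L)) =
      detCols (W ++ L) * detCols (y :: (X ++ L)) := by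
  classical
  obtain ⟨m, rfl⟩ : ∃ m, k = m + 1 := ⟨k - 1, by omega⟩
  obtain ⟨hli, hspan⟩ := hbasis
  have hWL : (W ++ L).length = m + 1 := by simp [hW]; omega
  set φ : (Fin (m + 1) → F) →ₗ[F] F :=
    (∑ j ∈ Finset.range (n + 1),
        ((-1 : F) ^ j * detCols (W.getD j 0 :: (X ++ L))) • detConsLin (W.eraseIdx j ++ L))
      - detCols (W ++ L) • detConsLin (X ++ L) with hφ
  have happ : ∀ v, φ v = ∑ j ∈ Finset.range (n + 1),
      ((-1 : F) ^ j * detCols (W.getD j 0 :: (X ++ L))) * detCols (v :: (W.eraseIdx j ++ L))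
      - detCols (W ++ L) * detCols (v :: (X ++ L)) := by
    intro v
    simp [hφ, LinearMap.sum_apply, smul_eq_mul]
  have hzero : φ = 0 := by
    apply LinearMap.ext_on hspan
    intro v hv
    rw [LinearMap.zero_apply, happ]
    simp only [Set.mem_setOf_eq, List.mem_append] at hv
    rcases hv with hvW | hvL
    · -- v is an element of W
      obtain ⟨i, hiW, hvi⟩ := List.mem_iff_getElem.mp hvW
      have hi : i < n + 1 := hW ▸ hiW
      have hik : i < m + 1 := by omega
      rw [Finset.sum_eq_single i]
      · -- the j = i term
        have hv0 : W.getD i 0 = v := by rw [List.getD_eq_getElem _ _ hiW, hvi]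
        have hMg : (W ++ L).getD i 0 = v := by
          rw [List.getD_append _ _ _ _ hiW, hv0]
        have hMe : (W ++ L).eraseIdx i = W.eraseIdx i ++ L :=
          List.eraseIdx_append_of_lt_length hiW L
        have hdet : detCols (v :: (W.eraseIdx i ++ L)) = (-1 : F) ^ i * detCols (W ++ L) := by
          rw [← hMg, ← hMe]
          exact detCols_cons_eraseIdx _ hWL i hik
        rw [hdet, hv0]
        have h1 : ((-1 : F) ^ i) * ((-1 : F) ^ i) = 1 := by
          rw [← pow_add, ← two_mul, pow_mul]; norm_num
        linear_combination detCols (v :: (X ++ L)) * detCols (W ++ L) * h1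
      · -- the j ≠ i terms vanish
        intro j hj hji
        have hjn : j < n + 1 := Finset.mem_range.mp hj
        have hjW : j < W.length := by omega
        have hlen : (W.eraseIdx j).length = n := by
          rw [List.length_eraseIdx, if_pos hjW, hW]; omega
        rcases Nat.lt_or_ge i j with hij | hij
        · -- i < j: v sits at column i + 1
          have hq : (i + 1 : ℕ) < m + 1 := by omega
          have : detCols (v :: (W.eraseIdx j ++ L)) = 0 := by
            refine detCols_zero_of_eq _ ⟨0, by omega⟩ ⟨i + 1, hq⟩ (by simp [Fin.ext_iff]) ?_
            simp only [List.getD_cons_zero]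
            show v = (v :: (W.eraseIdx j ++ L)).getD (i + 1) 0
            rw [List.getD_cons_succ, List.getD_append _ _ _ _ (by omega),
              List.getD_eq_getElem?_getD, List.getElem?_eraseIdx, if_pos hij,
              List.getElem?_eq_getElem hiW]
            simp [hvi]
          rw [this]; ring
        · -- j < i: v sits at column i
          have hij' : j < i := by omega
          have hq : i < m + 1 := by omega
          have : detCols (v :: (W.eraseIdx j ++ L)) = 0 := by
            refine detCols_zero_of_eq _ ⟨0, by omega⟩ ⟨i, hq⟩
              (by simp [Fin.ext_iff]; omega) ?_
            simp only [List.getD_cons_zero]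
            show v = (v :: (W.eraseIdx j ++ L)).getD i 0
            obtain ⟨i', rfl⟩ : ∃ i', i = i' + 1 := ⟨i - 1, by omega⟩
            rw [List.getD_cons_succ, List.getD_append _ _ _ _ (by omega),
              List.getD_eq_getElem?_getD, List.getElem?_eraseIdx, if_neg (by omega),
              List.getElem?_eq_getElem hiW]
            simp [hvi]
          rw [this]; ring
      · intro h; exact absurd (Finset.mem_range.mpr hi) h
    · -- v is an element of L
      obtain ⟨p, hpL, hvp⟩ := List.mem_iff_getElem.mp hvL
      have hq : n + 1 + p < m + 1 := by omega
      have key : ∀ T : List (Fin (m + 1) → F), T.length = n →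
          detCols (v :: (T ++ L)) = 0 := by
        intro T hT
        refine detCols_zero_of_eq _ ⟨0, by omega⟩ ⟨n + 1 + p, hq⟩ (by simp [Fin.ext_iff]; omega) ?_
        simp only [List.getD_cons_zero]
        show v = (v :: (T ++ L)).getD (n + 1 + p) 0
        rw [show n + 1 + p = (n + p) + 1 by omega, List.getD_cons_succ,
          List.getD_append_right _ _ _ _ (by omega), hT]
        rw [show n + p - n = p by omega, List.getD_eq_getElem _ _ hpL, hvp]
      have h1 : ∀ j ∈ Finset.range (n + 1),
          ((-1 : F) ^ j * detCols (W.getD j 0 :: (X ++ L))) *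
            detCols (v :: (W.eraseIdx j ++ L)) = 0 := by
        intro j hj
        have hjn : j < n + 1 := Finset.mem_range.mp hj
        have hjW : j < W.length := by omega
        rw [key _ (by rw [List.length_eraseIdx, if_pos hjW, hW]; omega)]; ring
      rw [Finset.sum_congr rfl h1, key X hX]
      simp
  have := DFunLike.congr_fun hzero y
  rw [happ, LinearMap.zero_apply, sub_eq_zero] at this
  rw [← this]
  exact Finset.sum_congr rfl fun j _ => by ring
end
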